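/- Let F be a totally real number field, p an odd prime, K the unique quadratic subfield of F(ζ_p)/F, and γ̄: G_K → k^× a character that is nontrivial even after restriction to G_{F(ζ_p)}. Let K(γ̄) be the fixed field of ker γ̄, let L = F(ζ_p) ∩ K(γ̄), and assume #ε(G_L) > 1. Then the F_p[G_K]-module k(εγ̄) has no Jordan–Hölder factors in common with k (trivial action), k(γ̄), or k(γ̄^{−1}); moreover the characters εγ̄ and γ̄ are nontrivial. -/

import Mathlib

noncomputable section
open Polynomial

/-- The absolute Galois group of a field `F`. -/
abbrev Gal (F : Type*) [Field F] : Type _ := AlgebraicClosure F ≃ₐ[F] AlgebraicClosure F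

/-- The canonical map from the absolute Galois group to ring automorphisms. -/
def galToRingAut (F : Type*) [Field F] :
    Gal F →* (AlgebraicClosure F ≃+* AlgebraicClosure F) where
  toFun σ := σ.toRingEquiv
  map_one' := rfl
  map_mul' _ _ := rfl

/-- The mod `p` cyclotomic character `ε` of the absolute Galois group of `F`. -/
def modCyc (F : Type*) [Field F] (p : ℕ) [NeZero p]
    (hcard : Nat.card (rootsOfUnity p (AlgebraicClosure F)) = p) :
    Gal F →* (ZMod p)ˣ :=
  (modularCyclotomicCharacter (AlgebraicClosure F) hcard).comp (galToRingAut F)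

/-- The inclusion `F_p^× → k^×` for a ring `k` of characteristic `p`. -/
def unitsToField (k : Type*) [CommRing k] (p : ℕ) [CharP k p] : (ZMod p)ˣ →* kˣ :=
  Units.map (ZMod.castHom dvd_rfl k).toMonoidHom

/-- `K(ψ)`: the fixed field of the kernel of a character `ψ` of `G_K = Gal(Ω/K)`,
regarded as an intermediate field of `Ω/F`. -/
def charFixedField {F : Type*} [Field F] (K : IntermediateField F (AlgebraicClosure F))
    {A : Type*} [CommGroup A] (ψ : ↥K.fixingSubgroup →* A) :
    IntermediateField F (AlgebraicClosure F) :=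
  IntermediateField.fixedField ((ψ.ker).map K.fixingSubgroup.subtype)

/-- Functoriality of `GL₂` along a ring homomorphism. -/
def mapGL {R S : Type*} [CommRing R] [CommRing S] (f : R →+* S) :
    GL (Fin 2) R →* GL (Fin 2) S :=
  Units.map (RingHom.toMonoidHom f.mapMatrix)

/-- A number field is totally real if all of its infinite places are real. -/
def TotallyReal (F : Type*) [Field F] [NumberField F] : Prop :=
  ∀ v : NumberField.InfinitePlace F, v.IsReal

/-- The finite places of a number field `F`. -/
abbrev Place (F : Type*) [Field F] [NumberField F] : Type _ :=
  IsDedekindDomain.HeightOneSpectrum (NumberField.RingOfIntegers F)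

/-- The cardinality `q_v` of the residue field at a finite place `v`. -/
def qv {F : Type*} [Field F] [NumberField F] (v : Place F) : ℕ :=
  Ideal.absNorm v.asIdeal

/-- The `F_p[Γ]`-module structure `k(ψ)` on `k` attached to a character
`ψ : Γ → kˣ`: the group `Γ` acts on the additive group of `k` through `ψ` by
multiplication. -/
def charRep (p : ℕ) {Γ : Type*} [Group Γ] (k : Type*) [Field k] [Algebra (ZMod p) k]
    (ψ : Γ →* kˣ) : Representation (ZMod p) Γ k where
  toFun g :=
    { toFun := fun x => (ψ g : k) * x
      map_add' := fun x y => mul_add _ x y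
      map_smul' := fun c x => by simp [Algebra.smul_def]; ring }
  map_one' := by ext x; simp
  map_mul' g h := by ext x; simp [mul_assoc]

/-- Two `R`-modules have a common Jordan–Hölder factor: some simple `R`-module is a
subquotient of both. -/
def HasCommonJHFactor (R : Type*) [Ring R] (M N : Type*) [AddCommGroup M] [Module R M]
    [AddCommGroup N] [Module R N] : Prop :=
  ∃ (A B : Submodule R M) (C D : Submodule R N), B ≤ A ∧ D ≤ C ∧
    IsSimpleModule R (↥A ⧸ (Submodule.comap A.subtype B)) ∧
    Nonempty ((↥A ⧸ (Submodule.comap A.subtype B)) ≃ₗ[R]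
      (↥C ⧸ (Submodule.comap C.subtype D)))

lemma key {p : ℕ} {Γ : Type*} [Group Γ] {k : Type*} [Field k] [Finite k]
    [Algebra (ZMod p) k] (ψ χ : Γ →* kˣ) (g : Γ)
    (h : HasCommonJHFactor (MonoidAlgebra (ZMod p) Γ)
      (charRep p k ψ).asModule (charRep p k χ).asModule)
    (hχ : χ g = 1) : ψ g = 1 := by
  by_contra hψ
  obtain ⟨A, B, C, D, hBA, hDC, hsimp, ⟨e⟩⟩ := h
  set R := MonoidAlgebra (ZMod p) Γ with hR
  set s : R := MonoidAlgebra.of (ZMod p) Γ g - 1 with hs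
  haveI : Finite ((charRep p k ψ).asModule) :=
    Finite.of_equiv k (charRep p k ψ).asModuleEquiv.symm.toEquiv
  -- the action of s on the χ-module is zero
  have hχ0 : ∀ y : (charRep p k χ).asModule, s • y = 0 := by
    intro y
    have h2 := (charRep p k χ).asModuleEquiv_symm_map_rho g ((charRep p k χ).asModuleEquiv y)
    have hrho : (charRep p k χ) g ((charRep p k χ).asModuleEquiv y)
        = (χ g : k) * ((charRep p k χ).asModuleEquiv y) := rfl
    rw [hrho, hχ, Units.val_one, one_mul, LinearEquiv.symm_apply_apply] at h2
    rw [hs, sub_smul, one_smul, ← h2, sub_self]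
  -- the action of s on the ψ-module is multiplication by α := ψ g - 1
  have hψs : ∀ x : (charRep p k ψ).asModule,
      (charRep p k ψ).asModuleEquiv (s • x)
        = ((ψ g : k) - 1) * (charRep p k ψ).asModuleEquiv x := by
    intro x
    have h2 := (charRep p k ψ).asModuleEquiv_symm_map_rho g ((charRep p k ψ).asModuleEquiv x)
    rw [LinearEquiv.symm_apply_apply] at h2
    have h3 := congrArg (charRep p k ψ).asModuleEquiv h2
    rw [LinearEquiv.apply_symm_apply] at h3
    have hrho : (charRep p k ψ) g ((charRep p k ψ).asModuleEquiv x)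
        = (ψ g : k) * ((charRep p k ψ).asModuleEquiv x) := rfl
    rw [hs, sub_smul, one_smul, map_sub, ← h3, hrho]
    ring
  have hα : ((ψ g : k) - 1) ≠ 0 := sub_ne_zero.mpr (by simpa using hψ)
  have hinj : Function.Injective (fun x : (charRep p k ψ).asModule => s • x) := by
    intro x x' hxx
    have := congrArg (charRep p k ψ).asModuleEquiv hxx
    rw [hψs, hψs] at this
    exact (charRep p k ψ).asModuleEquiv.injective (mul_left_cancel₀ hα this)
  -- s annihilates the common simple quotient
  have hQC : ∀ c : type_of% (e 0), s • c = 0 := by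
    intro c
    obtain ⟨⟨y, hy⟩, rfl⟩ := Submodule.Quotient.mk_surjective _ c
    rw [← Submodule.Quotient.mk_smul]
    have h0 : (s • (⟨y, hy⟩ : ↥C)) = 0 := Subtype.ext (by simpa using hχ0 y)
    rw [h0, Submodule.Quotient.mk_zero]
  have hQA : ∀ a : type_of% (e.symm 0), s • a = 0 := by
    intro a
    apply e.injective
    rw [map_smul, hQC, map_zero]
  have hAB : ∀ x ∈ A, s • x ∈ B := by
    intro x hx
    have h0 := hQA (Submodule.Quotient.mk ⟨x, hx⟩)
    rw [← Submodule.Quotient.mk_smul, Submodule.Quotient.mk_eq_zero] at h0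
    simpa [Submodule.mem_comap] using h0
  -- cardinality: B = A
  have hBAeq : B = A := by
    refine le_antisymm hBA ?_
    have c1 : Nat.card ↥A ≤ Nat.card ↥B :=
      Nat.card_le_card_of_injective (fun a : ↥A => (⟨s • (a : _), hAB a a.2⟩ : ↥B))
        (fun a a' hh => Subtype.ext (hinj (congrArg Subtype.val hh)))
    have hset : (B : Set ((charRep p k ψ).asModule)) = (A : Set ((charRep p k ψ).asModule)) := by
      apply Set.eq_of_subset_of_ncard_le hBA _ (Set.toFinite _)
      rw [← Nat.card_coe_set_eq, ← Nat.card_coe_set_eq]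
      exact c1
    exact le_of_eq (SetLike.coe_injective hset).symm
  have htop : Submodule.comap A.subtype B = ⊤ := by
    rw [hBAeq]; exact Submodule.comap_subtype_self A
  have hsub : Subsingleton (type_of% (e.symm 0)) :=
    Submodule.Quotient.subsingleton_iff.mpr htop
  haveI := hsimp
  haveI := IsSimpleModule.nontrivial R (type_of% (e.symm 0))
  exact not_subsingleton _ hsub


section Scratch
variable (p : ℕ) [Fact p.Prime]
  (F : Type) [Field F] [NumberField F]
  (hcard : Nat.card (rootsOfUnity p (AlgebraicClosure F)) = p)
  (ζ : AlgebraicClosure F) (hζ : IsPrimitiveRoot ζ p)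
include hζ
set_option linter.unusedSectionVars false

lemma spec_aux (σ : Gal F) :
    σ ζ = ζ ^ ((modCyc F p hcard σ : ZMod p)).val := by
  have htmem : (hζ.toRootsOfUnity : (AlgebraicClosure F)ˣ) ∈ rootsOfUnity p (AlgebraicClosure F) :=
    SetLike.coe_mem _
  have := modularCyclotomicCharacter.spec _ hcard (galToRingAut F σ) htmem
  rw [hζ.val_toRootsOfUnity_coe] at this
  exact this

lemma dir1 (σ : Gal F) (h : σ ζ = ζ) : modCyc F p hcard σ = 1 := by
  have hp : p.Prime := Fact.out
  have h2 := spec_aux p F hcard ζ hζ σ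
  rw [h] at h2
  have h3 : ((modCyc F p hcard σ : ZMod p)).val = 1 :=
    hζ.pow_inj (ZMod.val_lt _) hp.one_lt (by rw [← h2, pow_one])
  have h4 : (((modCyc F p hcard σ : ZMod p)).val : ZMod p) = ((1 : ℕ) : ZMod p) :=
    congrArg _ h3
  rw [ZMod.natCast_rightInverse _, Nat.cast_one] at h4
  exact Units.ext (h4.trans Units.val_one.symm)

lemma dir2 (σ : Gal F) (h : modCyc F p hcard σ = 1) : σ ζ = ζ := by
  have hp : p.Prime := Fact.out
  haveI : Fact (1 < p) := ⟨hp.one_lt⟩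
  rw [spec_aux p F hcard ζ hζ σ, h, Units.val_one, ZMod.val_one, pow_one]

end Scratch

/-- let `F` be a totally real number field, `p` an odd prime, `K` the
quadratic subfield of `F(ζ_p)/F`, and `γ̄ : G_K → kˣ` a character nontrivial on
`G_{F(ζ_p)}`.  Let `L = F(ζ_p) ∩ K(γ̄)` and assume `#ε(G_L) > 1`.  Then the
`F_p[G_K]`-module `k(εγ̄)` has no Jordan–Hölder factor in common with `k`, `k(γ̄)` or
`k(γ̄⁻¹)`; moreover the characters `εγ̄` and `γ̄` are nontrivial. -/
theorem statement7
    (p : ℕ) [Fact p.Prime] (hpodd : Odd p)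
    (F : Type) [Field F] [NumberField F] (hF : TotallyReal F)
    (hcard : Nat.card (rootsOfUnity p (AlgebraicClosure F)) = p)
    (ζ : AlgebraicClosure F) (hζ : IsPrimitiveRoot ζ p)
    -- `K` is the unique quadratic subfield of `F(ζ_p)/F`
    (K : IntermediateField F (AlgebraicClosure F))
    (hKζ : K ≤ IntermediateField.adjoin F {ζ}) (hK2 : Module.finrank F K = 2)
    (hsub : (IntermediateField.adjoin F {ζ}).fixingSubgroup ≤ K.fixingSubgroup)
    -- the coefficient field `k`
    (k : Type) [Field k] [Finite k] [CharP k p] [Algebra (ZMod p) k]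
    -- a character `γ̄` of `G_K`, nontrivial on `G_{F(ζ_p)}`
    (γ : ↥K.fixingSubgroup →* kˣ)
    (hγ : ∃ σ : Gal F, ∃ hσ : σ ∈ (IntermediateField.adjoin F {ζ}).fixingSubgroup,
      γ ⟨σ, hsub hσ⟩ ≠ 1)
    -- `L = F(ζ_p) ∩ K(γ̄)`, and `#ε(G_L) > 1`
    (L : IntermediateField F (AlgebraicClosure F))
    (hL : L = IntermediateField.adjoin F {ζ} ⊓ charFixedField K γ)
    (hεL : 1 < Nat.card (Subgroup.map (modCyc F p hcard) L.fixingSubgroup)) :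
    -- `ε` restricted to `G_K`, with values in `kˣ`
    ∀ εK : ↥K.fixingSubgroup →* kˣ,
      εK = (unitsToField k p).comp ((modCyc F p hcard).comp K.fixingSubgroup.subtype) →
      (¬ HasCommonJHFactor (MonoidAlgebra (ZMod p) ↥K.fixingSubgroup)
          (charRep p k (εK * γ)).asModule (charRep p k (1 : ↥K.fixingSubgroup →* kˣ)).asModule) ∧
      (¬ HasCommonJHFactor (MonoidAlgebra (ZMod p) ↥K.fixingSubgroup)
          (charRep p k (εK * γ)).asModule (charRep p k γ).asModule) ∧
      (¬ HasCommonJHFactor (MonoidAlgebra (ZMod p) ↥K.fixingSubgroup)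
          (charRep p k (εK * γ)).asModule (charRep p k γ⁻¹).asModule) ∧
      εK * γ ≠ 1 ∧ γ ≠ 1 := by
  intro εK hεK
  have hp : p.Prime := Fact.out
  obtain ⟨σ0, hσ0, hγ0⟩ := hγ
  have hσ0fix : σ0 ζ = ζ :=
    (IntermediateField.mem_fixingSubgroup_iff _ σ0).mp hσ0 ζ
      (IntermediateField.mem_adjoin_simple_self F ζ)
  have hεKval : ∀ τ : ↥K.fixingSubgroup,
      εK τ = (unitsToField k p) (modCyc F p hcard (τ : Gal F)) := by
    intro τ; rw [hεK]; rfl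
  have hUinj : ∀ x : (ZMod p)ˣ, unitsToField k p x = 1 → x = 1 := by
    intro x hx
    have hx' : unitsToField k p x = unitsToField k p 1 := hx.trans (map_one _).symm
    exact Units.map_injective (ZMod.castHom dvd_rfl k).injective hx'
  have hε0 : εK ⟨σ0, hsub hσ0⟩ = 1 := by
    rw [hεKval, dir1 p F hcard ζ hζ σ0 hσ0fix, map_one]
  have hne1 : εK * γ ≠ 1 := by
    intro hcon
    apply hγ0
    have h2 := DFunLike.congr_fun hcon ⟨σ0, hsub hσ0⟩
    rwa [MonoidHom.mul_apply, hε0, one_mul, MonoidHom.one_apply] at h2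
  have hγne : γ ≠ 1 := by
    intro hcon
    exact hγ0 (by rw [hcon]; rfl)
  have main : ¬ (∀ τ : ↥K.fixingSubgroup, γ τ = 1 → εK τ = 1) := by
    intro hall
    have hζL : ζ ∈ L := by
      rw [hL]
      refine ⟨IntermediateField.mem_adjoin_simple_self F ζ, ?_⟩
      show ζ ∈ IntermediateField.fixedField _
      rintro ⟨σ, hσ⟩
      obtain ⟨τ, hτker, rfl⟩ := hσ
      show (τ : Gal F) ζ = ζ
      have hγτ : γ τ = 1 := hτker
      have hε1 : modCyc F p hcard (τ : Gal F) = 1 := by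
        apply hUinj
        rw [← hεKval]
        exact hall τ hγτ
      exact dir2 p F hcard ζ hζ (τ : Gal F) hε1
    have hbot : Subgroup.map (modCyc F p hcard) L.fixingSubgroup = ⊥ := by
      rw [Subgroup.eq_bot_iff_forall]
      rintro x ⟨σ, hσL, rfl⟩
      exact dir1 p F hcard ζ hζ σ
        ((IntermediateField.mem_fixingSubgroup_iff _ σ).mp hσL ζ hζL)
    rw [hbot, Subgroup.card_bot] at hεL
    exact lt_irrefl 1 hεL
  refine ⟨?_, ?_, ?_, hne1, hγne⟩
  · intro h
    have h1 := key (εK * γ) 1 ⟨σ0, hsub hσ0⟩ h rfl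
    rw [MonoidHom.mul_apply, hε0, one_mul] at h1
    exact hγ0 h1
  · intro h
    apply main
    intro τ hτ
    have h1 := key (εK * γ) γ τ h hτ
    rwa [MonoidHom.mul_apply, hτ, mul_one] at h1
  · intro h
    apply main
    intro τ hτ
    have h1 := key (εK * γ) γ⁻¹ τ h (by rw [MonoidHom.inv_apply, hτ, inv_one])
    rwa [MonoidHom.mul_apply, hτ, mul_one] at h1
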